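/- Let G, H be finite groups with group matrix spaces GM^G, GM^H, GM^{G×H}. For M ∈ ℝ^{G×G} and N ∈ ℝ^{H×H}, dist(M ⊗ N, GM^{G×H}) ≤ max{‖M‖_F, ‖N‖_F} · (dist(M, GM^G) + dist(N, GM^H)). -/

import Mathlib

open Matrix Kronecker

/-- The set of group matrices of a group `K`. -/
def groupMatrices (K : Type*) [Group K] : Set (Matrix K K ℝ) :=
  {M | ∃ c : K → ℝ, ∀ h h' : K, M h h' = c (h * h'⁻¹)}

/-- The Frobenius norm of a matrix. -/
noncomputable def frobNorm {α : Type*} [Fintype α] (M : Matrix α α ℝ) : ℝ :=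
  Real.sqrt (∑ i, ∑ j, (M i j) ^ 2)

/-- Frobenius distance from a matrix to the group matrices of `K`. -/
noncomputable def distGM {K : Type*} [Group K] [Fintype K] (M : Matrix K K ℝ) : ℝ :=
  sInf {d : ℝ | ∃ M₀ ∈ groupMatrices K, d = frobNorm (M - M₀)}

namespace GMaux

attribute [local instance] Matrix.frobeniusSeminormedAddCommGroup

variable {α β : Type*} [Fintype α] [Fintype β]

/-- Frobenius inner product. -/
noncomputable def ip (A B : Matrix α α ℝ) : ℝ := ∑ i, ∑ j, A i j * B i j

lemma frobNorm_eq (A : Matrix α α ℝ) : frobNorm A = Real.sqrt (ip A A) := by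
  simp [frobNorm, ip, sq]

lemma frobNorm_nonneg (A : Matrix α α ℝ) : 0 ≤ frobNorm A := Real.sqrt_nonneg _

lemma ip_self_nonneg (A : Matrix α α ℝ) : 0 ≤ ip A A :=
  Finset.sum_nonneg fun _ _ => Finset.sum_nonneg fun _ _ => mul_self_nonneg _

lemma ip_comm (A B : Matrix α α ℝ) : ip A B = ip B A := by
  simp [ip, mul_comm]

lemma ip_expand (A B : Matrix α α ℝ) :
    ip (A + B) (A + B) = ip A A + 2 * ip A B + ip B B := by
  simp only [ip, Matrix.add_apply, add_mul, mul_add, Finset.sum_add_distrib]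
  have : ∑ i, ∑ j, B i j * A i j = ∑ i, ∑ j, A i j * B i j := by
    simp [mul_comm]
  rw [this]; ring

lemma frobNorm_eq_norm (A : Matrix α α ℝ) : frobNorm A = ‖A‖ := by
  rw [Matrix.frobenius_norm_def, frobNorm, Real.sqrt_eq_rpow]
  congr 1
  simp [Real.norm_eq_abs, sq_abs]

lemma frobNorm_add_le (A B : Matrix α α ℝ) :
    frobNorm (A + B) ≤ frobNorm A + frobNorm B := by
  simp only [frobNorm_eq_norm]; exact norm_add_le _ _

lemma frobNorm_kron (A : Matrix α α ℝ) (B : Matrix β β ℝ) :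
    frobNorm (A ⊗ₖ B) = frobNorm A * frobNorm B := by
  unfold frobNorm
  rw [← Real.sqrt_mul (x := ∑ i, ∑ j, A i j ^ 2) (Finset.sum_nonneg fun _ _ => Finset.sum_nonneg fun _ _ => sq_nonneg _)]
  congr 1
  simp_rw [Fintype.sum_prod_type, Matrix.kroneckerMap_apply, mul_pow,
    Finset.sum_mul_sum]

variable {K : Type*} [Group K] [Fintype K]

/-- Coefficient function of the orthogonal projection onto group matrices. -/
noncomputable def cProj (M : Matrix K K ℝ) (g : K) : ℝ :=
  (∑ x, M x (g⁻¹ * x)) / Fintype.card K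

/-- The orthogonal projection onto group matrices. -/
noncomputable def projGM (M : Matrix K K ℝ) : Matrix K K ℝ :=
  Matrix.of fun h h' => cProj M (h * h'⁻¹)

lemma projGM_mem (M : Matrix K K ℝ) : projGM M ∈ groupMatrices K :=
  ⟨cProj M, fun _ _ => rfl⟩

lemma sum_reindex (f : K → K → ℝ) (c : K → ℝ) :
    ∑ i, ∑ j, f i j * c (i * j⁻¹) = ∑ g, (∑ i, f i (g⁻¹ * i)) * c g := by
  have h1 : ∀ i : K, ∑ j, f i j * c (i * j⁻¹) = ∑ g, f i (g⁻¹ * i) * c g := by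
    intro i
    refine (Fintype.sum_equiv ((Equiv.inv K).trans (Equiv.mulRight i)) _ _ ?_).symm
    intro g
    have : i * ((g⁻¹ * i))⁻¹ = g := by group
    simp [Equiv.mulRight, this]
  simp_rw [h1]
  rw [Finset.sum_comm]
  simp [Finset.sum_mul]

lemma sum_proj (M : Matrix K K ℝ) (c : K → ℝ) :
    ∑ i, ∑ j, projGM M i j * c (i * j⁻¹) = ∑ i, ∑ j, M i j * c (i * j⁻¹) := by
  rw [sum_reindex (fun i j => projGM M i j) c, sum_reindex (fun i j => M i j) c]
  congr 1; ext g
  congr 1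
  have hent : ∀ i : K, projGM M i (g⁻¹ * i) = cProj M g := by
    intro i
    have : i * (g⁻¹ * i)⁻¹ = g := by group
    simp [projGM, this]
  simp_rw [hent]
  rw [Finset.sum_const]
  have hcard : (0 : ℝ) < Fintype.card K := by positivity
  simp [cProj, Finset.card_univ, mul_div_assoc]
  field_simp

lemma ip_sub_proj (M X : Matrix K K ℝ) (hX : X ∈ groupMatrices K) :
    ip (M - projGM M) X = 0 := by
  obtain ⟨c, hc⟩ := hX
  have : ip (M - projGM M) X =
      (∑ i, ∑ j, M i j * c (i * j⁻¹)) - ∑ i, ∑ j, projGM M i j * c (i * j⁻¹) := by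
    simp only [ip, Matrix.sub_apply, sub_mul, Finset.sum_sub_distrib]
    congr 1 <;> (congr 1; ext i; congr 1; ext j; rw [hc])
  rw [this, sum_proj, sub_self]

lemma groupMatrices_sub {A B : Matrix K K ℝ} (hA : A ∈ groupMatrices K)
    (hB : B ∈ groupMatrices K) : A - B ∈ groupMatrices K := by
  obtain ⟨c₁, h₁⟩ := hA; obtain ⟨c₂, h₂⟩ := hB
  exact ⟨fun g => c₁ g - c₂ g, fun h h' => by simp [h₁, h₂]⟩

lemma distGM_bddBelow (M : Matrix K K ℝ) :
    BddBelow {d : ℝ | ∃ M₀ ∈ groupMatrices K, d = frobNorm (M - M₀)} := by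
  refine ⟨0, ?_⟩
  rintro d ⟨M₀, _, rfl⟩
  exact frobNorm_nonneg _

lemma distGM_eq (M : Matrix K K ℝ) : distGM M = frobNorm (M - projGM M) := by
  refine le_antisymm (csInf_le (distGM_bddBelow M) ⟨projGM M, projGM_mem M, rfl⟩) ?_
  refine le_csInf ⟨_, projGM M, projGM_mem M, rfl⟩ ?_
  rintro d ⟨M₀, hM₀, rfl⟩
  rw [frobNorm_eq, frobNorm_eq]
  apply Real.sqrt_le_sqrt
  have hsplit : M - M₀ = (M - projGM M) + (projGM M - M₀) := by abel
  have h0 : ip (M - projGM M) (projGM M - M₀) = 0 :=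
    ip_sub_proj M _ (groupMatrices_sub (projGM_mem M) hM₀)
  rw [hsplit, ip_expand, h0]
  have := ip_self_nonneg (projGM M - M₀)
  linarith

lemma frobNorm_projGM_le (M : Matrix K K ℝ) : frobNorm (projGM M) ≤ frobNorm M := by
  rw [frobNorm_eq, frobNorm_eq]
  apply Real.sqrt_le_sqrt
  have hsplit : M = (M - projGM M) + projGM M := by abel
  have h0 : ip (M - projGM M) (projGM M) = 0 := ip_sub_proj M _ (projGM_mem M)
  have hexp : ip M M = ip (M - projGM M) (M - projGM M) + 2 * ip (M - projGM M) (projGM M)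
      + ip (projGM M) (projGM M) := by
    conv_lhs => rw [hsplit]
    exact ip_expand _ _
  have := ip_self_nonneg (M - projGM M)
  rw [hexp, h0]; linarith

lemma kron_mem {G H : Type*} [Group G] [Group H] [Fintype G] [Fintype H]
    {A : Matrix G G ℝ} {B : Matrix H H ℝ} (hA : A ∈ groupMatrices G)
    (hB : B ∈ groupMatrices H) : A ⊗ₖ B ∈ groupMatrices (G × H) := by
  obtain ⟨c₁, h₁⟩ := hA; obtain ⟨c₂, h₂⟩ := hB
  exact ⟨fun g => c₁ g.1 * c₂ g.2, fun h h' => by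
    simp [Matrix.kroneckerMap_apply, h₁, h₂]⟩

end GMaux

open GMaux in
/-- `dist(M ⊗ N, GM^{G×H}) ≤ max{‖M‖, ‖N‖} (dist(M, GM^G) + dist(N, GM^H))`. -/
theorem distGM_kronecker_le {G H : Type*} [Group G] [Group H]
    [Fintype G] [Fintype H] (M : Matrix G G ℝ) (N : Matrix H H ℝ) :
    distGM (M ⊗ₖ N : Matrix (G × H) (G × H) ℝ) ≤
      max (frobNorm M) (frobNorm N) * (distGM M + distGM N) := by
  have h1 : distGM (M ⊗ₖ N : Matrix (G × H) (G × H) ℝ) ≤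
      frobNorm (M ⊗ₖ N - projGM M ⊗ₖ projGM N) :=
    csInf_le (distGM_bddBelow _) ⟨_, kron_mem (projGM_mem M) (projGM_mem N), rfl⟩
  have hsplit : M ⊗ₖ N - projGM M ⊗ₖ projGM N =
      (M - projGM M) ⊗ₖ projGM N + M ⊗ₖ (N - projGM N) := by
    ext ⟨i, k⟩ ⟨j, l⟩
    simp [Matrix.kroneckerMap_apply]
    ring
  have h2 : frobNorm (M ⊗ₖ N - projGM M ⊗ₖ projGM N) ≤
      frobNorm (M - projGM M) * frobNorm (projGM N) + frobNorm M * frobNorm (N - projGM N) := by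
    rw [hsplit]
    calc _ ≤ frobNorm ((M - projGM M) ⊗ₖ projGM N) + frobNorm (M ⊗ₖ (N - projGM N)) :=
          frobNorm_add_le _ _
      _ = _ := by rw [frobNorm_kron, frobNorm_kron]
  rw [distGM_eq M, distGM_eq N]
  have hPN := frobNorm_projGM_le N
  have hMmax : frobNorm M ≤ max (frobNorm M) (frobNorm N) := le_max_left _ _
  have hNmax' : frobNorm N ≤ max (frobNorm M) (frobNorm N) := le_max_right _ _
  have hdM := frobNorm_nonneg (M - projGM M)
  have hdN := frobNorm_nonneg (N - projGM N)
  have hN0 := frobNorm_nonneg (projGM N)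
  nlinarith [mul_le_mul_of_nonneg_left hPN hdM,
    mul_le_mul_of_nonneg_left hNmax' hdM,
    mul_le_mul_of_nonneg_right hMmax hdN]
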